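/- Let q be an even integer with 0 < q < m. Then for every t ∈ V_m, ξ⁻_q(t)·(ξ⁺_1(t) − ξ⁺_1(−q)) = (q+1)·ξ⁺_{q+1}(t) in R, where ξ⁺_1(−q) ∈ R is the value of ξ⁺_1 at the vertex −q. -/

import Mathlib

noncomputable section

open Finset MvPolynomial

/-- The coefficient ring `R = ℚ[α,δ]`, realized as polynomials in two variables. -/
abbrev Rpoly : Type := MvPolynomial (Fin 2) ℚ

/-- The variable `α`. -/
def va : Rpoly := X 0

/-- The variable `δ`. -/
def vd : Rpoly := X 1

/-- `P⁻(a,b) = ∏_{k=a}^{b} (−α + k·δ)`. -/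
def Pneg (a b : ℤ) : Rpoly :=
  ∏ k ∈ Finset.Icc a b, (-va + MvPolynomial.C (k : ℚ) * vd)

/-- `P⁺(a,b) = ∏_{k=a}^{b} (α + k·δ)`. -/
def Ppos (a b : ℤ) : Rpoly :=
  ∏ k ∈ Finset.Icc a b, (va + MvPolynomial.C (k : ℚ) * vd)

/-- Binomial coefficient `C(n,q)` (all uses have `n ≥ 0`). -/
def B (n : ℤ) (q : ℕ) : ℚ := (n.toNat).choose q

/-- The Knutson–Tao class `ξ⁺_q = ξ(m+q, m−q)`, as a function on vertices `t`
(the vertex `t` encodes the pair `(m+t, m−t)`). -/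
def xiP (m : ℤ) (q : ℕ) (t : ℤ) : Rpoly :=
  if (q : ℤ) ≤ t ∧ t ≤ m then
    MvPolynomial.C (B (⌈((t : ℚ) - (q : ℚ) + 1) / 2⌉ + q - 1) q) *
      Pneg (⌈((t : ℚ) - (q : ℚ) + 1) / 2⌉ - 1) (⌈((t : ℚ) - (q : ℚ) + 1) / 2⌉ + q - 2)
  else if -m ≤ t ∧ t ≤ -((q : ℤ) + 1) then
    MvPolynomial.C (B (⌈(-(t : ℚ) - (q : ℚ)) / 2⌉ + q - 1) q) *
      Ppos (⌈(-(t : ℚ) - (q : ℚ)) / 2⌉ + 1) (⌈(-(t : ℚ) - (q : ℚ)) / 2⌉ + q)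
  else 0

/-- The Knutson–Tao class `ξ⁻_q = ξ(m−q, m+q)`. -/
def xiM (m : ℤ) (q : ℕ) (t : ℤ) : Rpoly :=
  if (q : ℤ) + 1 ≤ t ∧ t ≤ m then
    MvPolynomial.C (B (⌈((t : ℚ) - (q : ℚ)) / 2⌉ + q - 1) q) *
      Pneg (⌈((t : ℚ) - (q : ℚ)) / 2⌉) (⌈((t : ℚ) - (q : ℚ)) / 2⌉ + q - 1)
  else if -m ≤ t ∧ t ≤ -(q : ℤ) then
    MvPolynomial.C (B (⌈(-(t : ℚ) - (q : ℚ) + 1) / 2⌉ + q - 1) q) *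
      Ppos (⌈(-(t : ℚ) - (q : ℚ) + 1) / 2⌉) (⌈(-(t : ℚ) - (q : ℚ) + 1) / 2⌉ + q - 1)
  else 0

/-- The weight of the vertex `t`: `w(t) = ((1−2t)/2)·α + (t(t−1)/2)·δ`. -/
def w (t : ℤ) : Rpoly :=
  MvPolynomial.C ((1 - 2 * (t : ℚ)) / 2) * va +
    MvPolynomial.C (((t : ℚ) * ((t : ℚ) - 1)) / 2) * vd

lemma ceil_int (x : ℚ) (n : ℤ) (h : x = n) : ⌈x⌉ = n := by rw [h, Int.ceil_intCast]

lemma ceil_half (x : ℚ) (n : ℤ) (h : x = n + 1/2) : ⌈x⌉ = n + 1 := by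
  have h1 : ⌈(1/2 : ℚ)⌉ = 1 := by norm_num [Int.ceil_eq_iff]
  rw [h, add_comm, Int.ceil_add_intCast, h1]; ring

lemma B_eval (a : ℤ) (q nn : ℕ) (h : a.toNat = nn) : B a q = (nn.choose q : ℚ) := by
  rw [B, h]

lemma Pneg_split (a b a' b' : ℤ) (h : a ≤ b) (ha : a' = a + 1) (hb : b' = b) :
    Pneg a b = (-va + MvPolynomial.C (a : ℚ) * vd) * Pneg a' b' := by
  rw [ha, hb]
  rw [Pneg, Pneg, show Finset.Icc a b = insert a (Finset.Icc (a+1) b) from by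
    ext x; simp only [Finset.mem_Icc, Finset.mem_insert]; omega,
    Finset.prod_insert (by simp [Finset.mem_Icc])]

lemma Ppos_split_top (a b b' : ℤ) (h : a ≤ b) (hb : b' = b - 1) :
    Ppos a b = Ppos a b' * (va + MvPolynomial.C (b : ℚ) * vd) := by
  rw [hb]
  rw [Ppos, Ppos, show Finset.Icc a b = insert b (Finset.Icc a (b-1)) from by
    ext x; simp only [Finset.mem_Icc, Finset.mem_insert]; omega,
    Finset.prod_insert (by simp [Finset.mem_Icc]), mul_comm]

lemma Pneg_single (a b : ℤ) (h : b = a) : Pneg a b = -va + MvPolynomial.C (a : ℚ) * vd := by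
  subst h; rw [Pneg, Finset.Icc_self, Finset.prod_singleton]

lemma Ppos_single (a b : ℤ) (h : b = a) : Ppos a b = va + MvPolynomial.C (a : ℚ) * vd := by
  subst h; rw [Ppos, Finset.Icc_self, Finset.prod_singleton]

lemma xiM_pos (m : ℤ) (q : ℕ) (t : ℤ) (h1 : (q:ℤ)+1 ≤ t) (h2 : t ≤ m) :
    xiM m q t = MvPolynomial.C (B (⌈((t : ℚ) - (q : ℚ)) / 2⌉ + q - 1) q) *
      Pneg (⌈((t : ℚ) - (q : ℚ)) / 2⌉) (⌈((t : ℚ) - (q : ℚ)) / 2⌉ + q - 1) := by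
  rw [xiM, if_pos ⟨h1, h2⟩]

lemma xiM_neg (m : ℤ) (q : ℕ) (t : ℤ) (h0 : t < (q:ℤ)+1) (h1 : -m ≤ t) (h2 : t ≤ -(q:ℤ)) :
    xiM m q t = MvPolynomial.C (B (⌈(-(t : ℚ) - (q : ℚ) + 1) / 2⌉ + q - 1) q) *
      Ppos (⌈(-(t : ℚ) - (q : ℚ) + 1) / 2⌉) (⌈(-(t : ℚ) - (q : ℚ) + 1) / 2⌉ + q - 1) := by
  rw [xiM, if_neg (by omega), if_pos ⟨h1, h2⟩]

lemma xiM_zero (m : ℤ) (q : ℕ) (t : ℤ) (h1 : t < (q:ℤ)+1) (h2 : -(q:ℤ) < t) :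
    xiM m q t = 0 := by
  rw [xiM, if_neg (by omega), if_neg (by omega)]

lemma xiP_pos (m : ℤ) (q : ℕ) (t : ℤ) (h1 : (q:ℤ) ≤ t) (h2 : t ≤ m) :
    xiP m q t = MvPolynomial.C (B (⌈((t : ℚ) - (q : ℚ) + 1) / 2⌉ + q - 1) q) *
      Pneg (⌈((t : ℚ) - (q : ℚ) + 1) / 2⌉ - 1) (⌈((t : ℚ) - (q : ℚ) + 1) / 2⌉ + q - 2) := by
  rw [xiP, if_pos ⟨h1, h2⟩]

lemma xiP_neg (m : ℤ) (q : ℕ) (t : ℤ) (h0 : t < (q:ℤ)) (h1 : -m ≤ t) (h2 : t ≤ -((q:ℤ)+1)) :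
    xiP m q t = MvPolynomial.C (B (⌈(-(t : ℚ) - (q : ℚ)) / 2⌉ + q - 1) q) *
      Ppos (⌈(-(t : ℚ) - (q : ℚ)) / 2⌉ + 1) (⌈(-(t : ℚ) - (q : ℚ)) / 2⌉ + q) := by
  rw [xiP, if_neg (by omega), if_pos ⟨h1, h2⟩]

lemma xiP_zero (m : ℤ) (q : ℕ) (t : ℤ) (h1 : t < (q:ℤ)) (h2 : -((q:ℤ)+1) < t) :
    xiP m q t = 0 := by
  rw [xiP, if_neg (by omega), if_neg (by omega)]

lemma mainA (m : ℤ) (p n : ℕ) (hp : 1 ≤ p) (t : ℤ) (ht2 : t ≤ m)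
    (hA : ((2*p : ℕ):ℤ) + 1 ≤ t)
    (e1 : ⌈((t : ℚ) - ((2*p : ℕ) : ℚ)) / 2⌉ = (n:ℤ) + 1)
    (e2 : ⌈((t : ℚ) - ((1:ℕ) : ℚ) + 1) / 2⌉ = (n:ℤ) + (p:ℤ) + 1)
    (e3 : ⌈((t : ℚ) - ((2*p+1 : ℕ) : ℚ) + 1) / 2⌉ = (n:ℤ) + 1) :
    xiM m (2*p) t * (xiP m 1 t - xiP m 1 (-((2*p : ℕ) : ℤ))) =
      ((2*p + 1 : ℕ) : Rpoly) * xiP m (2*p+1) t := by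
  have e4 : ⌈(-(Int.cast (-((2*p : ℕ) : ℤ)) : ℚ) - ((1:ℕ) : ℚ)) / 2⌉ = (p:ℤ) := by
    rw [ceil_half _ ((p:ℤ) - 1) (by push_cast; ring)]; ring
  rw [xiM_pos m (2*p) t (by exact_mod_cast hA) ht2,
      xiP_pos m 1 t (by push_cast at hA ⊢; omega) ht2,
      xiP_neg m 1 (-((2*p : ℕ) : ℤ)) (by push_cast; omega) (by push_cast at hA ht2 ⊢; omega) (by push_cast; omega),
      xiP_pos m (2*p+1) t (by push_cast at hA ⊢; omega) ht2,
      e1, e2, e3, e4]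
  rw [B_eval ((n:ℤ) + 1 + ((2*p : ℕ):ℤ) - 1) (2*p) (n+2*p) (by omega),
      B_eval ((n:ℤ) + (p:ℤ) + 1 + ((1:ℕ):ℤ) - 1) 1 (n+p+1) (by omega),
      B_eval ((p:ℤ) + ((1:ℕ):ℤ) - 1) 1 p (by omega),
      B_eval ((n:ℤ) + 1 + ((2*p+1 : ℕ):ℤ) - 1) (2*p+1) (n+2*p+1) (by omega),
      Pneg_single ((n:ℤ) + (p:ℤ) + 1 - 1) ((n:ℤ) + (p:ℤ) + 1 + ((1:ℕ):ℤ) - 2) (by push_cast; ring),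
      Ppos_single ((p:ℤ) + 1) ((p:ℤ) + ((1:ℕ):ℤ)) (by push_cast; ring),
      Pneg_split ((n:ℤ) + 1 - 1) ((n:ℤ) + 1 + ((2*p+1 : ℕ):ℤ) - 2) ((n:ℤ) + 1) ((n:ℤ) + 1 + ((2*p : ℕ):ℤ) - 1) (by push_cast; omega) (by ring) (by push_cast; ring)]
  simp only [Nat.choose_one_right]
  have key := congrArg (Nat.cast : ℕ → Rpoly) (Nat.add_one_mul_choose_eq (n + 2*p) (2*p))
  push_cast at key ⊢
  simp only [map_add, map_sub, map_mul, map_one, map_ofNat, map_natCast]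
  linear_combination ((-va + (n : Rpoly) * vd) * Pneg ((n:ℤ)+1) ((n:ℤ)+1+2*(p:ℤ)-1)) * key

lemma mainB (m : ℤ) (p n : ℕ) (hp : 1 ≤ p) (t : ℤ) (ht1 : -m ≤ t)
    (hB : t ≤ -((2*p : ℕ):ℤ) - 2)
    (e1 : ⌈(-(t : ℚ) - ((2*p : ℕ) : ℚ) + 1) / 2⌉ = (n:ℤ) + 2)
    (e2 : ⌈(-(t : ℚ) - ((1:ℕ) : ℚ)) / 2⌉ = (n:ℤ) + (p:ℤ) + 1)
    (e3 : ⌈(-(t : ℚ) - ((2*p+1 : ℕ) : ℚ)) / 2⌉ = (n:ℤ) + 1) :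
    xiM m (2*p) t * (xiP m 1 t - xiP m 1 (-((2*p : ℕ) : ℤ))) =
      ((2*p + 1 : ℕ) : Rpoly) * xiP m (2*p+1) t := by
  have e4 : ⌈(-(Int.cast (-((2*p : ℕ) : ℤ)) : ℚ) - ((1:ℕ) : ℚ)) / 2⌉ = (p:ℤ) := by
    rw [ceil_half _ ((p:ℤ) - 1) (by push_cast; ring)]; ring
  rw [xiM_neg m (2*p) t (by push_cast at hB ⊢; omega) ht1 (by push_cast at hB ⊢; omega),
      xiP_neg m 1 t (by push_cast at hB ⊢; omega) ht1 (by push_cast at hB ⊢; omega),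
      xiP_neg m 1 (-((2*p : ℕ) : ℤ)) (by push_cast; omega)
        (by push_cast at hB ht1 ⊢; omega) (by push_cast; omega),
      xiP_neg m (2*p+1) t (by push_cast at hB ⊢; omega) ht1 (by push_cast at hB ⊢; omega),
      e1, e2, e3, e4]
  rw [show ((n:ℤ)+1+1) = ((n:ℤ)+2) from by ring]
  rw [B_eval ((n:ℤ)+2+((2*p : ℕ):ℤ)-1) (2*p) (n+2*p+1) (by omega),
      B_eval ((n:ℤ)+(p:ℤ)+1+((1:ℕ):ℤ)-1) 1 (n+p+1) (by omega),
      B_eval ((p:ℤ)+((1:ℕ):ℤ)-1) 1 p (by omega),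
      B_eval ((n:ℤ)+1+((2*p+1 : ℕ):ℤ)-1) (2*p+1) (n+2*p+1) (by omega),
      Ppos_single ((n:ℤ)+(p:ℤ)+1+1) ((n:ℤ)+(p:ℤ)+1+((1:ℕ):ℤ)) (by push_cast; ring),
      Ppos_single ((p:ℤ)+1) ((p:ℤ)+((1:ℕ):ℤ)) (by push_cast; ring),
      Ppos_split_top ((n:ℤ)+2) ((n:ℤ)+1+((2*p+1 : ℕ):ℤ)) ((n:ℤ)+2+((2*p : ℕ):ℤ)-1)
        (by push_cast; omega) (by push_cast; ring)]
  simp only [Nat.choose_one_right]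
  have key := congrArg (Nat.cast : ℕ → Rpoly) (Nat.choose_succ_right_eq (n + 2*p + 1) (2*p))
  rw [show (n + 2*p + 1) - (2*p) = n + 1 from by omega] at key
  push_cast at key ⊢
  simp only [map_add, map_sub, map_mul, map_one, map_ofNat, map_natCast]
  linear_combination (-(Ppos ((n:ℤ)+2) ((n:ℤ)+2+2*(p:ℤ)-1) * (va + ((n:Rpoly)+1+(2*(p:Rpoly)+1)) * vd))) * key

/-- for even `0 < q < m`,
`ξ⁻_q · (ξ⁺_1 − ξ⁺_1(−q)) = (q+1) · ξ⁺_{q+1}` pointwise on `V_m`. -/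
theorem statement7 (m : ℕ) (hm : 1 ≤ m) (q : ℕ) (heven : Even q)
    (hq0 : 0 < q) (hqm : q < m)
    (t : ℤ) (ht1 : -(m : ℤ) ≤ t) (ht2 : t ≤ (m : ℤ)) :
    xiM m q t * (xiP m 1 t - xiP m 1 (-(q : ℤ))) = ((q + 1 : ℕ) : Rpoly) * xiP m (q + 1) t := by
  obtain ⟨p, rfl⟩ : ∃ p, q = 2 * p := ⟨q / 2, by obtain ⟨r, hr⟩ := heven; omega⟩
  have hp : 1 ≤ p := by omega
  have hpm : 2 * p < m := by omega
  by_cases hA : ((2*p : ℕ):ℤ) + 1 ≤ t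
  · obtain ⟨n, hn | hn⟩ : ∃ n : ℕ, t = 2*(n:ℤ)+2*(p:ℤ)+1 ∨ t = 2*(n:ℤ)+2*(p:ℤ)+2 := by
      refine ⟨((t - 2*(p:ℤ) - 1)/2).toNat, ?_⟩
      push_cast at hA; omega
    · exact mainA m p n hp t ht2 hA
        (ceil_half _ (n:ℤ) (by rw [hn]; push_cast; ring))
        (ceil_half _ ((n:ℤ)+(p:ℤ)) (by rw [hn]; push_cast; ring))
        (ceil_half _ (n:ℤ) (by rw [hn]; push_cast; ring))
    · exact mainA m p n hp t ht2 hA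
        (ceil_int _ ((n:ℤ)+1) (by rw [hn]; push_cast; ring))
        (ceil_int _ ((n:ℤ)+(p:ℤ)+1) (by rw [hn]; push_cast; ring))
        (ceil_int _ ((n:ℤ)+1) (by rw [hn]; push_cast; ring))
  by_cases h0 : t = -((2*p : ℕ):ℤ)
  · rw [h0, sub_self, mul_zero,
        xiP_zero m (2*p+1) (-((2*p : ℕ):ℤ)) (by push_cast; omega) (by push_cast; omega), mul_zero]
  by_cases h1 : t = -((2*p : ℕ):ℤ) - 1
  · have c1 : ⌈(-(Int.cast (-((2*p : ℕ):ℤ) - 1) : ℚ) - ((1:ℕ):ℚ))/2⌉ = (p:ℤ) :=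
      ceil_int _ _ (by push_cast; ring)
    have c2 : ⌈(-(Int.cast (-((2*p : ℕ):ℤ)) : ℚ) - ((1:ℕ):ℚ))/2⌉ = (p:ℤ) := by
      rw [ceil_half _ ((p:ℤ) - 1) (by push_cast; ring)]; ring
    have hv : xiP m 1 t = xiP m 1 (-((2*p : ℕ):ℤ)) := by
      rw [h1,
          xiP_neg m 1 (-((2*p : ℕ):ℤ) - 1) (by push_cast; omega)
            (by push_cast; omega) (by push_cast; omega),
          xiP_neg m 1 (-((2*p : ℕ):ℤ)) (by push_cast; omega)
            (by push_cast; omega) (by push_cast; omega),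
          c1, c2]
    rw [hv, sub_self, mul_zero,
        xiP_zero m (2*p+1) t (by push_cast at hA ⊢; omega) (by rw [h1]; push_cast; omega), mul_zero]
  by_cases hB : t ≤ -((2*p : ℕ):ℤ) - 2
  · obtain ⟨n, hn | hn⟩ : ∃ n : ℕ, t = -(2*(n:ℤ)+2*(p:ℤ)+2) ∨ t = -(2*(n:ℤ)+2*(p:ℤ)+3) := by
      refine ⟨((-t - 2*(p:ℤ) - 2)/2).toNat, ?_⟩
      push_cast at hB; omega
    · exact mainB m p n hp t ht1 hB
        (by rw [ceil_half _ ((n:ℤ)+1) (by rw [hn]; push_cast; ring)]; ring)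
        (ceil_half _ ((n:ℤ)+(p:ℤ)) (by rw [hn]; push_cast; ring))
        (ceil_half _ (n:ℤ) (by rw [hn]; push_cast; ring))
    · exact mainB m p n hp t ht1 hB
        (ceil_int _ ((n:ℤ)+2) (by rw [hn]; push_cast; ring))
        (ceil_int _ ((n:ℤ)+(p:ℤ)+1) (by rw [hn]; push_cast; ring))
        (ceil_int _ ((n:ℤ)+1) (by rw [hn]; push_cast; ring))
  · rw [xiM_zero m (2*p) t (by push_cast at hA ⊢; omega)
        (by push_cast at hB h0 h1 ⊢; omega), zero_mul,
        xiP_zero m (2*p+1) t (by push_cast at hA ⊢; omega)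
          (by push_cast at hB h0 h1 ⊢; omega), mul_zero]
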